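/- Let φ and Φ denote the standard normal density and CDF. The function g(η) = -η·φ(η)/(1-Φ(η)) + φ(η)²/(1-Φ(η))² is strictly positive for all η ∈ ℝ. -/

import Mathlib

open MeasureTheory

/-- Standard normal density. -/
noncomputable def stdNormalPDF (x : ℝ) : ℝ := Real.exp (-(x ^ 2) / 2) / Real.sqrt (2 * Real.pi)

/-- Standard normal CDF. -/
noncomputable def stdNormalCDF (x : ℝ) : ℝ := ∫ t in Set.Iic x, stdNormalPDF t

open Real Set Filter Function Topology

lemma stdNormalPDF_pos (x : ℝ) : 0 < stdNormalPDF x := by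
  unfold stdNormalPDF; positivity

lemma stdNormalPDF_eq (x : ℝ) :
    stdNormalPDF x = Real.exp (-(1/2 : ℝ) * x ^ 2) / Real.sqrt (2 * Real.pi) := by
  unfold stdNormalPDF; ring_nf

lemma integrable_stdNormalPDF : Integrable stdNormalPDF := by
  simp only [funext stdNormalPDF_eq, div_eq_mul_inv]
  exact (integrable_exp_neg_mul_sq (by norm_num)).mul_const _

lemma integral_stdNormalPDF : ∫ x, stdNormalPDF x = 1 := by
  simp only [funext stdNormalPDF_eq, div_eq_mul_inv]
  rw [integral_mul_const, integral_gaussian]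
  rw [← Real.sqrt_inv, ← Real.sqrt_mul (by positivity), Real.sqrt_eq_one]
  have hπ : (0:ℝ) < π := Real.pi_pos
  field_simp

lemma cdf_add_tail (x : ℝ) :
    stdNormalCDF x + ∫ t in Set.Ioi x, stdNormalPDF t = 1 := by
  rw [stdNormalCDF, intervalIntegral.integral_Iic_add_Ioi integrable_stdNormalPDF.integrableOn
    integrable_stdNormalPDF.integrableOn, integral_stdNormalPDF]

lemma tail_pos (x : ℝ) : 0 < ∫ t in Set.Ioi x, stdNormalPDF t := by
  rw [setIntegral_pos_iff_support_of_nonneg_ae]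
  · have hs : Function.support stdNormalPDF = Set.univ := by
      ext t; simp [(stdNormalPDF_pos t).ne']
    simp [hs]
  · filter_upwards with t using (stdNormalPDF_pos t).le
  · exact integrable_stdNormalPDF.integrableOn

lemma hasDerivAt_neg_pdf (t : ℝ) :
    HasDerivAt (fun s => -stdNormalPDF s) (t * stdNormalPDF t) t := by
  have h : HasDerivAt (fun s : ℝ => -(s ^ 2) / 2) (-t) t := by
    have := ((hasDerivAt_pow 2 t).fun_neg).div_const 2
    refine this.congr_deriv ?_
    norm_num; ring
  have h2 := ((h.exp).div_const (Real.sqrt (2 * Real.pi))).neg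
  have : HasDerivAt (fun s => -stdNormalPDF s)
      (-(Real.exp (-(t ^ 2) / 2) * -t / Real.sqrt (2 * Real.pi))) t := by
    simpa [stdNormalPDF, Pi.neg_def] using h2
  convert this using 1
  rw [stdNormalPDF]; ring

lemma integrable_mul_pdf : Integrable (fun t : ℝ => t * stdNormalPDF t) := by
  simp only [funext stdNormalPDF_eq, div_eq_mul_inv, ← mul_assoc]
  exact (integrable_mul_exp_neg_mul_sq (by norm_num : (0:ℝ) < 1/2)).mul_const _

lemma integral_Ioi_mul_pdf (x : ℝ) :
    ∫ t in Set.Ioi x, t * stdNormalPDF t = stdNormalPDF x := by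
  have htend : Tendsto (fun s => -stdNormalPDF s) atTop (𝓝 0) := by
    rw [show (0:ℝ) = -(0 / Real.sqrt (2 * Real.pi)) by simp]
    apply Tendsto.neg
    apply Tendsto.div_const
    apply Real.tendsto_exp_atBot.comp
    have h1 : Tendsto (fun s : ℝ => s ^ 2 / 2) atTop atTop :=
      (tendsto_pow_atTop two_ne_zero).atTop_div_const (by norm_num)
    simpa [neg_div] using tendsto_neg_atBot_iff.mpr h1
  have := integral_Ioi_of_hasDerivAt_of_tendsto' (f := fun s => -stdNormalPDF s)
    (f' := fun t => t * stdNormalPDF t) (a := x)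
    (fun t _ => hasDerivAt_neg_pdf t) integrable_mul_pdf.integrableOn htend
  simpa using this

lemma key (η : ℝ) : η * (∫ t in Set.Ioi η, stdNormalPDF t) < stdNormalPDF η := by
  rcases le_or_gt η 0 with hle | hpos
  · exact (mul_nonpos_of_nonpos_of_nonneg hle (tail_pos η).le).trans_lt (stdNormalPDF_pos η)
  · have hdiff : 0 < ∫ t in Set.Ioi η, (t - η) * stdNormalPDF t := by
      rw [setIntegral_pos_iff_support_of_nonneg_ae]
      · have hsub : Set.Ioi η ⊆ Function.support (fun t => (t - η) * stdNormalPDF t) ∩ Set.Ioi η := by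
          intro t ht
          refine ⟨?_, ht⟩
          simp only [Function.mem_support]
          exact mul_ne_zero (sub_ne_zero.mpr (ne_of_gt ht)) (stdNormalPDF_pos t).ne'
        calc (0:ENNReal) < volume (Set.Ioi η) := by simp
          _ ≤ _ := measure_mono hsub
      · filter_upwards [ae_restrict_mem (measurableSet_Ioi)] with t ht
        exact mul_nonneg (sub_nonneg.mpr (le_of_lt ht)) (stdNormalPDF_pos t).le
      · apply Integrable.integrableOn
        have := integrable_mul_pdf.sub (integrable_stdNormalPDF.const_mul η)
        apply this.congr
        filter_upwards with t
        simp only [Pi.sub_apply]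
        ring
    have heq : ∫ t in Set.Ioi η, (t - η) * stdNormalPDF t
        = stdNormalPDF η - η * ∫ t in Set.Ioi η, stdNormalPDF t := by
      rw [show (fun t => (t - η) * stdNormalPDF t)
          = fun t => t * stdNormalPDF t - η * stdNormalPDF t from funext fun t => by ring]
      rw [integral_sub integrable_mul_pdf.integrableOn
        (integrable_stdNormalPDF.integrableOn.const_mul η),
        integral_Ioi_mul_pdf, integral_const_mul]
    rw [heq] at hdiff
    linarith

/-- `g(η) = -η φ(η)/(1-Φ(η)) + φ(η)²/(1-Φ(η))²` is strictly positive on ℝ. -/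
theorem stmt2 (η : ℝ) :
    0 < -η * stdNormalPDF η / (1 - stdNormalCDF η)
        + (stdNormalPDF η) ^ 2 / (1 - stdNormalCDF η) ^ 2 := by
  have hD : 1 - stdNormalCDF η = ∫ t in Set.Ioi η, stdNormalPDF t := by
    have := cdf_add_tail η; linarith
  set D := 1 - stdNormalCDF η with hDdef
  have hDpos : 0 < D := hD ▸ tail_pos η
  have hkey : η * D < stdNormalPDF η := hD ▸ key η
  have hφ := stdNormalPDF_pos η
  have heq : -η * stdNormalPDF η / D + (stdNormalPDF η) ^ 2 / D ^ 2
      = stdNormalPDF η * (stdNormalPDF η - η * D) / D ^ 2 := by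
    field_simp
    ring
  rw [heq]
  have : 0 < stdNormalPDF η - η * D := by linarith
  positivity
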